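/- Let I₁, J₁, I₂, J₂, … be nonempty finite intervals in ℤ with min J_k = max I_k + 1 and min I_{k+1} = max J_k + 1 for all k ≥ 1, such that the sequences (#I_k) and (#J_k) are strictly increasing. Then for any integers a, n with n ≠ 0, the set W = {x ∈ ℤ : x < min I₁, x ≡ a mod n} ∪ ⋃_{k≥1} I_k admits no minimal asymptotic complement in ℤ. -/

import Mathlib

open Pointwise

def IsAddAsympCompl (W C : Set ℤ) : Prop :=
  C.Nonempty ∧ ((Set.univ : Set ℤ) \ (W + C)).Finite

def IsAddMinAsympCompl (W C : Set ℤ) : Prop :=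
  IsAddAsympCompl W C ∧ ∀ c ∈ C, ¬ IsAddAsympCompl W (C \ {c})

theorem stmt_17 (p q r s : ℕ → ℤ)
    (hI : ∀ k, 1 ≤ k → p k ≤ q k)
    (hJ : ∀ k, 1 ≤ k → r k ≤ s k)
    (hadj1 : ∀ k, 1 ≤ k → r k = q k + 1)
    (hadj2 : ∀ k, 1 ≤ k → p (k + 1) = s k + 1)
    (hmonoI : ∀ k, 1 ≤ k → q k - p k < q (k + 1) - p (k + 1))
    (hmonoJ : ∀ k, 1 ≤ k → s k - r k < s (k + 1) - r (k + 1))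
    (a n : ℤ) (hn : n ≠ 0)
    (W : Set ℤ)
    (hW : W = {x : ℤ | x < p 1 ∧ x ≡ a [ZMOD n]} ∪
      ⋃ k ∈ {k : ℕ | 1 ≤ k}, Set.Icc (p k) (q k)) :
    ¬ ∃ C : Set ℤ, IsAddMinAsympCompl W C := by
  rintro ⟨C, ⟨⟨hCne, hfin⟩, hmin⟩⟩
  -- basic monotonicity facts
  have hsucc : ∀ k, 1 ≤ k → q k + 2 ≤ p (k + 1) := by
    intro k hk
    have h1 := hadj1 k hk
    have h2 := hadj2 k hk
    have h3 := hJ k hk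
    omega
  have hpmono : ∀ j k, 1 ≤ j → j ≤ k → p j ≤ p k := by
    intro j k hj hjk
    induction k, hjk using Nat.le_induction with
    | base => exact le_refl _
    | succ k hjk ih =>
      have h1 := hsucc k (le_trans hj hjk)
      have h2 := hI k (le_trans hj hjk)
      omega
  have hqmono : ∀ j k, 1 ≤ j → j ≤ k → q j ≤ q k := by
    intro j k hj hjk
    induction k, hjk using Nat.le_induction with
    | base => exact le_refl _
    | succ k hjk ih =>
      have h1 := hsucc k (le_trans hj hjk)
      have h2 := hI (k + 1) (by omega)
      omega
  have hqstrict : ∀ j k, 1 ≤ j → j < k → q j < q k := by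
    intro j k hj hjk
    have h1 := hsucc j hj
    have h2 := hpmono (j + 1) k (by omega) (by omega)
    have h3 := hI k (by omega)
    omega
  have hlenmono : ∀ j k, 1 ≤ j → j ≤ k → q j - p j ≤ q k - p k := by
    intro j k hj hjk
    induction k, hjk using Nat.le_induction with
    | base => exact le_refl _
    | succ k hjk ih =>
      have h1 := hmonoI k (le_trans hj hjk)
      omega
  have hlen : ∀ k : ℕ, 1 ≤ k → (k : ℤ) - 1 ≤ q k - p k := by
    intro k hk
    induction k, hk using Nat.le_induction with
    | base => have := hI 1 le_rfl; simpa using this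
    | succ k hk ih =>
      have h1 := hmonoI k hk
      push_cast
      omega
  have hgapLen : ∀ k : ℕ, 1 ≤ k → (k : ℤ) ≤ s k - q k := by
    have haux : ∀ k : ℕ, 1 ≤ k → (k : ℤ) - 1 ≤ s k - r k := by
      intro k hk
      induction k, hk using Nat.le_induction with
      | base => have := hJ 1 le_rfl; simpa using this
      | succ k hk ih =>
        have h1 := hmonoJ k hk
        push_cast
        omega
    intro k hk
    have h1 := haux k hk
    have h2 := hadj1 k hk
    omega
  -- membership in W
  have hWmem : ∀ x : ℤ, x ∈ W ↔
      (x < p 1 ∧ x ≡ a [ZMOD n]) ∨ ∃ k, 1 ≤ k ∧ p k ≤ x ∧ x ≤ q k := by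
    intro x
    rw [hW]
    simp only [Set.mem_union, Set.mem_setOf_eq, Set.mem_iUnion, Set.mem_Icc, exists_prop]
  -- unique representation helper
  have hrep : ∀ c : ℤ, ∀ x : ℤ, x ∈ W + C → x ∉ W + (C \ {c}) → x - c ∈ W := by
    intro c x hx hnx
    obtain ⟨w, hw, c', hc', hsum⟩ := Set.mem_add.mp hx
    by_cases hcc : c' = c
    · subst hcc
      have hwe : w = x - c' := by omega
      rwa [hwe] at hw
    · exfalso
      apply hnx
      have hmem : c' ∈ C \ {c} := ⟨hc', fun h => hcc (Set.mem_singleton_iff.mp h)⟩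
      have := Set.add_mem_add hw hmem
      rwa [hsum] at this
  -- Step 1: C is infinite
  have hCinf : C.Infinite := by
    by_contra hCfin
    rw [Set.not_infinite] at hCfin
    obtain ⟨u, hu⟩ := hCfin.bddAbove
    obtain ⟨l, hl⟩ := hCfin.bddBelow
    set K : ℕ := (1 + u - l).toNat + 1 with hK
    have hg : ∀ m : ℕ, (q (K + m) + 1 + u) ∈ Set.univ \ (W + C) := by
      intro m
      refine ⟨trivial, ?_⟩
      intro hmem
      obtain ⟨w, hw, c, hc, hsum⟩ := Set.mem_add.mp hmem
      have hkk : 1 ≤ K + m := by omega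
      have hcu : c ≤ u := hu hc
      have hcl : l ≤ c := hl hc
      have hgk : ((K + m : ℕ) : ℤ) ≤ s (K + m) - q (K + m) := hgapLen _ hkk
      have hKcast : (1 + u - l : ℤ) ≤ ((K + m : ℕ) : ℤ) := by
        push_cast
        omega
      have h1 : q (K + m) < w := by omega
      have h2 : w ≤ s (K + m) := by omega
      rcases (hWmem w).mp hw with ⟨hlt, _⟩ | ⟨j, hj, hpj, hqj⟩
      · have hp1 := hpmono 1 (K + m) le_rfl hkk
        have := hI (K + m) hkk
        omega
      · rcases le_or_gt j (K + m) with hle | hlt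
        · have := hqmono j (K + m) hj hle
          omega
        · have hpj2 := hpmono (K + m + 1) j (by omega) hlt
          have := hadj2 (K + m) hkk
          omega
    have hinj : Function.Injective (fun m : ℕ => q (K + m) + 1 + u) := by
      intro m m' h
      simp only at h
      by_contra hne
      rcases Nat.lt_or_ge m m' with h' | h'
      · have := hqstrict (K + m) (K + m') (by omega) (by omega); omega
      · have h'' : m' < m := by omega
        have := hqstrict (K + m') (K + m) (by omega) (by omega); omega
    exact (Set.not_infinite.mpr hfin) (Set.infinite_of_injective_forall_mem hinj hg)
  -- Step 2: each c ∈ C is "needed": exclusively covered points are infinite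
  have hE : ∀ c ∈ C, {x : ℤ | x ∈ W + C ∧ x ∉ W + (C \ {c})}.Infinite := by
    intro c hc
    have hne : (C \ {c}).Nonempty := (hCinf.diff (Set.finite_singleton c)).nonempty
    have hnfin : ¬ (Set.univ \ (W + (C \ {c}))).Finite := fun h => hmin c hc ⟨hne, h⟩
    have h1 : (Set.univ \ (W + (C \ {c}))).Infinite := hnfin
    have h2 := h1.diff hfin
    refine h2.mono ?_
    rintro x ⟨⟨-, hx1⟩, hx2⟩
    refine ⟨?_, hx1⟩
    by_contra hxW
    exact hx2 ⟨trivial, hxW⟩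
  -- Step 3: split into left/right needed
  have hLRof : ∀ c ∈ C,
      {x : ℤ | (x ∈ W + C ∧ x ∉ W + (C \ {c})) ∧ x < p 1 + c}.Infinite ∨
      {x : ℤ | (x ∈ W + C ∧ x ∉ W + (C \ {c})) ∧ p 1 + c ≤ x}.Infinite := by
    intro c hc
    by_contra h
    push_neg at h
    obtain ⟨h1, h2⟩ := h
    refine hE c hc ((h1.union h2).subset ?_)
    intro x hx
    by_cases hx' : x < p 1 + c
    · exact Or.inl ⟨hx, hx'⟩
    · exact Or.inr ⟨hx, by omega⟩
  -- Step 4: left-needed c is alone in its residue class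
  have hleft : ∀ c ∈ C,
      {x : ℤ | (x ∈ W + C ∧ x ∉ W + (C \ {c})) ∧ x < p 1 + c}.Infinite →
      ∀ c' ∈ C, c' ≡ c [ZMOD n] → c' = c := by
    intro c hc hinf c' hc' hmod
    by_contra hne
    have hx : ∃ x, ((x ∈ W + C ∧ x ∉ W + (C \ {c})) ∧ x < p 1 + c) ∧ x < p 1 + c' := by
      by_contra hno
      push_neg at hno
      refine hinf ((Set.finite_Icc (p 1 + c') (p 1 + c)).subset ?_)
      intro x hxS
      exact ⟨hno x hxS, by have := hxS.2; omega⟩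
    obtain ⟨x, ⟨⟨hxWC, hxnot⟩, hxc⟩, hxc'⟩ := hx
    have hwW : x - c ∈ W := hrep c x hxWC hxnot
    rcases (hWmem _).mp hwW with ⟨hlt, hwm⟩ | ⟨k, hk, hpk, hqk⟩
    · -- x - c ≡ a, so x - c' ∈ W too
      apply hxnot
      have hmod2 : x - c' ≡ a [ZMOD n] :=
        (Int.ModEq.sub (Int.ModEq.refl x) hmod).trans hwm
      have hWm : x - c' ∈ W := (hWmem _).mpr (Or.inl ⟨by omega, hmod2⟩)
      have hmem : c' ∈ C \ {c} := ⟨hc', fun h => hne (Set.mem_singleton_iff.mp h)⟩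
      have := Set.add_mem_add hWm hmem
      have he : x - c' + c' = x := by ring
      rwa [he] at this
    · have hp1 := hpmono 1 k le_rfl hk
      omega
  -- Step 5: right-needed c is extremal in C
  have hright : ∀ c ∈ C,
      {x : ℤ | (x ∈ W + C ∧ x ∉ W + (C \ {c})) ∧ p 1 + c ≤ x}.Infinite →
      (∀ c' ∈ C, c' ≤ c) ∨ (∀ c' ∈ C, c ≤ c') := by
    intro c hc hinf
    by_contra h
    push_neg at h
    obtain ⟨⟨c₂, hc₂, hcc₂⟩, ⟨c₁, hc₁, hcc₁⟩⟩ := h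
    set K : ℕ := ((c - c₁) + (c₂ - c)).toNat + 1 with hK
    have hx : ∃ x, ((x ∈ W + C ∧ x ∉ W + (C \ {c})) ∧ p 1 + c ≤ x) ∧ q K + c < x := by
      by_contra hno
      push_neg at hno
      refine hinf ((Set.finite_Icc (p 1 + c) (q K + c)).subset ?_)
      intro x hxS
      exact ⟨hxS.2, hno x hxS⟩
    obtain ⟨x, ⟨⟨hxWC, hxnot⟩, hxc⟩, hxK⟩ := hx
    have hwW : x - c ∈ W := hrep c x hxWC hxnot
    rcases (hWmem _).mp hwW with ⟨hlt, -⟩ | ⟨k, hk, hpk, hqk⟩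
    · omega
    · have hK1 : 1 ≤ K := by omega
      have hKk : K ≤ k := by
        by_contra hlt'
        have := hqmono k K hk (by omega)
        omega
      have hlenK : (K : ℤ) - 1 ≤ q K - p K := hlen K hK1
      have hlm : q K - p K ≤ q k - p k := hlenmono K k hK1 hKk
      have h2 : x - c₂ ∉ W := by
        intro hW2
        apply hxnot
        have hmem : c₂ ∈ C \ {c} :=
          ⟨hc₂, fun hh => by have := Set.mem_singleton_iff.mp hh; omega⟩
        have := Set.add_mem_add hW2 hmem
        have he : x - c₂ + c₂ = x := by ring
        rwa [he] at this
      have h1 : x - c₁ ∉ W := by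
        intro hW1
        apply hxnot
        have hmem : c₁ ∈ C \ {c} :=
          ⟨hc₁, fun hh => by have := Set.mem_singleton_iff.mp hh; omega⟩
        have := Set.add_mem_add hW1 hmem
        have he : x - c₁ + c₁ = x := by ring
        rwa [he] at this
      have hA : x - c₂ < p k := by
        by_contra hA
        push_neg at hA
        exact h2 ((hWmem _).mpr (Or.inr ⟨k, hk, hA, by omega⟩))
      have hB : q k < x - c₁ := by
        by_contra hB
        push_neg at hB
        exact h1 ((hWmem _).mpr (Or.inr ⟨k, hk, by omega, hB⟩))
      omega
  -- Assemble: C is finite, contradiction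
  haveI : NeZero n.natAbs := ⟨Int.natAbs_ne_zero.mpr hn⟩
  have hLfin : {c : ℤ | c ∈ C ∧
      {x : ℤ | (x ∈ W + C ∧ x ∉ W + (C \ {c})) ∧ x < p 1 + c}.Infinite}.Finite := by
    apply Set.Finite.of_finite_image (f := fun c : ℤ => (c : ZMod n.natAbs))
    · exact Set.toFinite _
    · rintro c₁ ⟨hc₁, hinf₁⟩ c₂ ⟨hc₂, hinf₂⟩ hcast
      have hmod0 : c₁ ≡ c₂ [ZMOD (n.natAbs : ℤ)] :=
        (ZMod.intCast_eq_intCast_iff c₁ c₂ n.natAbs).mp hcast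
      have hdvd : (n.natAbs : ℤ) ∣ c₂ - c₁ := Int.ModEq.dvd hmod0
      have hmod : c₁ ≡ c₂ [ZMOD n] := Int.modEq_iff_dvd.mpr (Int.natAbs_dvd.mp hdvd)
      exact hleft c₂ hc₂ hinf₂ c₁ hc₁ hmod
  have hmaxsub : ({c : ℤ | c ∈ C ∧ ∀ c' ∈ C, c' ≤ c}).Subsingleton := by
    rintro c₁ ⟨h₁, h₁'⟩ c₂ ⟨h₂, h₂'⟩
    exact le_antisymm (h₂' c₁ h₁) (h₁' c₂ h₂)
  have hminsub : ({c : ℤ | c ∈ C ∧ ∀ c' ∈ C, c ≤ c'}).Subsingleton := by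
    rintro c₁ ⟨h₁, h₁'⟩ c₂ ⟨h₂, h₂'⟩
    exact le_antisymm (h₁' c₂ h₂) (h₂' c₁ h₁)
  have hRfin : {c : ℤ | c ∈ C ∧
      {x : ℤ | (x ∈ W + C ∧ x ∉ W + (C \ {c})) ∧ p 1 + c ≤ x}.Infinite}.Finite := by
    refine Set.Finite.subset (hmaxsub.finite.union hminsub.finite) ?_
    rintro c ⟨hc, hinf⟩
    rcases hright c hc hinf with h | h
    · exact Or.inl ⟨hc, h⟩
    · exact Or.inr ⟨hc, h⟩
  have hCfin : C.Finite := by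
    refine (hLfin.union hRfin).subset ?_
    intro c hc
    rcases hLRof c hc with h | h
    · exact Or.inl ⟨hc, h⟩
    · exact Or.inr ⟨hc, h⟩
  exact hCinf hCfin
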